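/- Let f : (ZMod 2)^n → ZMod 2 be a Boolean function with at least 2 essential variables. If f is not of any of the special forms x_{i_1} + ⋯ + x_{i_m} + c, x_i x_j + x_i + c, x_i x_j + x_i x_k + x_j x_k + c, or x_i x_j + x_i x_k + x_j x_k + x_i + x_j + c (over the two-element field, c ∈ {0,1}), then the arity gap of f is 1, i.e. there exist distinct indices i, j with x_i, x_j essential in f such that ess f_{i←j} = ess f − 1. -/

import Mathlib

/-- The `i`-th variable is essential in `f`. -/
def Essential {A B : Type*} {n : ℕ} (f : (Fin n → A) → B) (i : Fin n) : Prop :=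
  ∃ (a : Fin n → A) (b : A), f a ≠ f (Function.update a i b)

/-- The essential arity of `f`: the number of essential variables. -/
noncomputable def essArity {A B : Type*} {n : ℕ} (f : (Fin n → A) → B) : ℕ :=
  Set.ncard {i : Fin n | Essential f i}

/-- The variable identification minor `f_{i←j}`, substituting `x j` for `x i`. -/
def idMinor {A B : Type*} {n : ℕ} (f : (Fin n → A) → B) (i j : Fin n) :
    (Fin n → A) → B :=
  fun x => f (Function.update x i (x j))

/-- The arity gap of `f`:
`ess f − max { ess f_{i←j} : i ≠ j, x_i and x_j essential in f }`. -/
noncomputable def arityGap {A B : Type*} {n : ℕ} (f : (Fin n → A) → B) : ℕ :=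
  essArity f -
    sSup {m : ℕ | ∃ i j : Fin n, i ≠ j ∧ Essential f i ∧ Essential f j ∧
      m = essArity (idMinor f i j)}

namespace Stmt7

variable {n : ℕ}

abbrev Pt (n : ℕ) := Fin n → ZMod 2
abbrev Fn (n : ℕ) := Pt n → ZMod 2

lemma zcases (z : ZMod 2) : z = 0 ∨ z = 1 := by revert z; decide

open Function

lemma ess_iff {f : Fn n} {i : Fin n} :
    Essential f i ↔ ∃ x : Pt n, f (update x i 0) ≠ f (update x i 1) := by
  constructor
  · rintro ⟨a, b, h⟩
    rcases zcases (a i) with h0 | h0 <;> rcases zcases b with h1 | h1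
    · exact absurd (by rw [h1, ← h0, update_eq_self]) (Ne.symm h)
    · refine ⟨a, ?_⟩
      rwa [show update a i 0 = a by rw [← h0, update_eq_self], ← h1]
    · refine ⟨a, ?_⟩
      rw [show update a i 1 = a by rw [← h0, update_eq_self], ← h1]
      exact h.symm
    · exact absurd (by rw [h1, ← h0, update_eq_self]) (Ne.symm h)
  · rintro ⟨x, hx⟩
    exact ⟨update x i 0, 1, by rwa [update_idem]⟩

lemma not_ess_iff {f : Fn n} {i : Fin n} :
    ¬ Essential f i ↔ ∀ (x : Pt n) (a : ZMod 2), f (update x i a) = f x := by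
  constructor
  · intro h x a
    have h' : ∀ (u : Pt n) (b : ZMod 2), f u = f (update u i b) := by
      intro u b
      by_contra hne
      exact h ⟨u, b, hne⟩
    calc f (update x i a) = f (update (update x i a) i (x i)) := h' _ _
      _ = f (update x i (x i)) := by rw [update_idem]
      _ = f x := by rw [update_eq_self]
  · rintro h ⟨a, b, hab⟩
    exact hab (h a b).symm

/-- restriction of one variable -/
def rst (f : Fn n) (i : Fin n) (a : ZMod 2) : Fn n := fun x => f (update x i a)

lemma ess_rst {f : Fn n} {i k : Fin n} {a : ZMod 2} (hki : k ≠ i)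
    (h : Essential (rst f i a) k) : Essential f k := by
  rw [ess_iff] at h ⊢
  obtain ⟨x, hx⟩ := h
  refine ⟨update x i a, ?_⟩
  simpa only [rst, update_comm hki] using hx

lemma not_ess_rst_self {f : Fn n} {i : Fin n} {a : ZMod 2} :
    ¬ Essential (rst f i a) i :=
  not_ess_iff.mpr (fun x b => by simp only [rst, update_idem])

lemma rst_of_not_ess {f : Fn n} {i : Fin n} (h : ¬ Essential f i) (a : ZMod 2) :
    rst f i a = f :=
  funext fun x => not_ess_iff.mp h x a

/-- agreement on essential variables determines the value -/
lemma agree_on_ess (f : Fn n) (x y : Pt n)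
    (h : ∀ i, Essential f i → x i = y i) : f x = f y := by
  suffices H : ∀ (N : ℕ) (x y : Pt n),
      (Finset.univ.filter (fun i => x i ≠ y i)).card ≤ N →
      (∀ i, Essential f i → x i = y i) → f x = f y from
    H _ x y le_rfl h
  intro N
  induction N with
  | zero =>
    intro x y hc h
    have : x = y := by
      funext e
      by_contra he
      have : e ∈ Finset.univ.filter (fun i => x i ≠ y i) := by simp [he]
      rw [Finset.card_eq_zero.mp (Nat.le_zero.mp hc)] at this
      exact absurd this (Finset.notMem_empty e)
    rw [this]
  | succ N ih =>
    intro x y hc h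
    by_cases hxy : x = y
    · rw [hxy]
    obtain ⟨i0, hi0⟩ : ∃ i, x i ≠ y i := by
      by_contra hno
      push_neg at hno
      exact hxy (funext hno)
    have hni : ¬ Essential f i0 := fun he => hi0 (h i0 he)
    have step : f x = f (update x i0 (y i0)) := (not_ess_iff.mp hni x (y i0)).symm
    rw [step]
    have hmem : i0 ∈ Finset.univ.filter (fun i => x i ≠ y i) := by simp [hi0]
    refine ih (update x i0 (y i0)) y ?_ ?_
    · have hsub : (Finset.univ.filter (fun i => update x i0 (y i0) i ≠ y i)) ⊆
          (Finset.univ.filter (fun i => x i ≠ y i)).erase i0 := by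
        intro e he
        simp only [Finset.mem_filter, Finset.mem_univ, true_and] at he
        have hei : e ≠ i0 := by
          intro rfl'
          subst rfl'
          rw [update_self] at he
          exact he rfl
        rw [update_of_ne hei] at he
        exact Finset.mem_erase.mpr ⟨hei, by simp [he]⟩
      calc _ ≤ ((Finset.univ.filter (fun i => x i ≠ y i)).erase i0).card :=
            Finset.card_le_card hsub
        _ = (Finset.univ.filter (fun i => x i ≠ y i)).card - 1 :=
            Finset.card_erase_of_mem hmem
        _ ≤ N := by omega
    · intro i hi
      by_cases hii : i = i0
      · subst hii; rw [update_self]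
      · rw [update_of_ne hii]; exact h i hi

lemma const_of_no_ess {f : Fn n} (h : ∀ i, ¬ Essential f i) (x y : Pt n) :
    f x = f y :=
  agree_on_ess f x y (fun i hi => absurd hi (h i))


/-! ### double restrictions, non-nullity, cover, good pairs -/

/-- `R2 f i j a b x = f (x[i:=a][j:=b])` -/
def R2 (f : Fn n) (i j : Fin n) (a b : ZMod 2) : Fn n :=
  fun x => f (update (update x i a) j b)

lemma R2_eq_rst (f : Fn n) (i j : Fin n) (a b : ZMod 2) :
    R2 f i j a b = rst (rst f j b) i a := rfl

lemma ess_R2 {f : Fn n} {i j k : Fin n} {a b : ZMod 2} (hki : k ≠ i) (hkj : k ≠ j)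
    (h : Essential (R2 f i j a b) k) : Essential f k := by
  rw [R2_eq_rst] at h
  exact ess_rst hkj (ess_rst hki h)

lemma not_ess_R2_left {f : Fn n} {i j : Fin n} {a b : ZMod 2} :
    ¬ Essential (R2 f i j a b) i := by
  refine not_ess_iff.mpr (fun x c => ?_)
  simp only [R2]
  rw [update_idem]

lemma not_ess_R2_right {f : Fn n} {i j : Fin n} {a b : ZMod 2} (hij : i ≠ j) :
    ¬ Essential (R2 f i j a b) j := by
  refine not_ess_iff.mpr (fun x c => ?_)
  simp only [R2]
  rw [update_comm hij.symm, update_idem]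

/-- the pair `{i,j}` is non-null: the diagonal restrictions differ -/
def NN (f : Fn n) (i j : Fin n) : Prop :=
  ∃ x : Pt n, R2 f i j 0 0 x ≠ R2 f i j 1 1 x

/-- `c` is covered by the pair `{i,j}` -/
def Cov (f : Fn n) (i j c : Fin n) : Prop :=
  Essential (R2 f i j 0 0) c ∨ Essential (R2 f i j 1 1) c

/-- good pair -/
def Good (f : Fn n) (i j : Fin n) : Prop :=
  NN f i j ∧ ∀ c, Essential f c → c ≠ i → c ≠ j → Cov f i j c

lemma cov_ess {f : Fn n} {i j c : Fin n} (hci : c ≠ i) (hcj : c ≠ j)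
    (h : Cov f i j c) : Essential f c :=
  h.elim (fun h' => ess_R2 hci hcj h') (fun h' => ess_R2 hci hcj h')

lemma not_cov_left {f : Fn n} {i j : Fin n} : ¬ Cov f i j i := by
  rintro (h | h) <;> exact not_ess_R2_left h

lemma not_cov_right {f : Fn n} {i j : Fin n} (hij : i ≠ j) : ¬ Cov f i j j := by
  rintro (h | h) <;> exact not_ess_R2_right hij h

/-! ### essential variables of the identification minor -/

lemma minor_not_ess_left {f : Fn n} {i j : Fin n} (hij : i ≠ j) :
    ¬ Essential (idMinor f i j) i := by
  refine not_ess_iff.mpr (fun x a => ?_)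
  simp only [idMinor]
  rw [update_idem, update_of_ne hij.symm]

lemma minor_ess_right_iff {f : Fn n} {i j : Fin n} (hij : i ≠ j) :
    Essential (idMinor f i j) j ↔ NN f i j := by
  have key : ∀ (x : Pt n) (b : ZMod 2),
      idMinor f i j (update x j b) = R2 f i j b b x := by
    intro x b
    simp only [idMinor, R2]
    rw [update_self, update_comm hij.symm]
  rw [ess_iff]
  constructor
  · rintro ⟨x, hx⟩
    exact ⟨x, by rwa [key, key] at hx⟩
  · rintro ⟨x, hx⟩
    exact ⟨x, by rwa [key, key]⟩

lemma minor_ess_other_iff {f : Fn n} {i j k : Fin n} (hij : i ≠ j)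
    (hki : k ≠ i) (hkj : k ≠ j) :
    Essential (idMinor f i j) k ↔ Cov f i j k := by
  constructor
  · intro h
    rw [ess_iff] at h
    obtain ⟨x, hx⟩ := h
    have key : ∀ c : ZMod 2, idMinor f i j (update x k c) =
        f (update (update x i (x j)) k c) := by
      intro c
      simp only [idMinor]
      rw [update_of_ne hkj.symm, update_comm hki]
    rw [key, key] at hx
    set z := update x i (x j) with hz
    have hzi : z i = x j := by rw [hz, update_self]
    have hzj : z j = x j := by rw [hz, update_of_ne hij.symm]
    have key2 : ∀ c : ZMod 2, f (update z k c) = R2 f i j (x j) (x j) (update z k c) := by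
      intro c
      simp only [R2]
      have h1 : update (update z k c) i (x j) = update z k c := by
        rw [show x j = (update z k c) i by rw [update_of_ne hki.symm, hzi],
          update_eq_self]
      have h2 : update (update z k c) j (x j) = update z k c := by
        rw [show x j = (update z k c) j by rw [update_of_ne hkj.symm, hzj],
          update_eq_self]
      rw [h1, h2]
    rw [key2, key2] at hx
    rcases zcases (x j) with h0 | h0 <;> rw [h0] at hx
    · exact Or.inl (ess_iff.mpr ⟨z, hx⟩)
    · exact Or.inr (ess_iff.mpr ⟨z, hx⟩)
  · intro h
    have main : ∀ b : ZMod 2, Essential (R2 f i j b b) k →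
        Essential (idMinor f i j) k := by
      intro b h'
      rw [ess_iff] at h' ⊢
      obtain ⟨y, hy⟩ := h'
      set z := update (update y i b) j b with hz
      have hzi : z i = b := by rw [hz, update_of_ne hij, update_self]
      have hzj : z j = b := by rw [hz, update_self]
      have key : ∀ c : ZMod 2, R2 f i j b b (update y k c) =
          idMinor f i j (update z k c) := by
        intro c
        have hL : R2 f i j b b (update y k c) = f (update z k c) := by
          simp only [R2]
          rw [update_comm hki, update_comm hkj, hz]
        have hR : idMinor f i j (update z k c) = f (update z k c) := by
          simp only [idMinor]
          rw [update_of_ne hkj.symm, hzj, update_comm hki,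
            show b = z i from hzi.symm, update_eq_self]
        rw [hL, hR]
      rw [key, key] at hy
      exact ⟨z, hy⟩
    rcases h with h' | h'
    · exact main 0 h'
    · exact main 1 h'

/-- essential set of the minor is contained in `E \ {i}` -/
lemma minor_ess_subset {f : Fn n} {i j : Fin n} (hij : i ≠ j)
    (hj : Essential f j) {c : Fin n} (hc : Essential (idMinor f i j) c) :
    Essential f c ∧ c ≠ i := by
  by_cases hci : c = i
  · subst hci
    exact absurd hc (minor_not_ess_left hij)
  by_cases hcj : c = j
  · exact ⟨hcj ▸ hj, hci⟩
  · have := (minor_ess_other_iff hij hci hcj).mp hc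
    exact ⟨cov_ess hci hcj this, hci⟩

/-- a good pair identification keeps everything except `i` -/
lemma minor_ess_eq_of_good {f : Fn n} {i j : Fin n} (hij : i ≠ j)
    (hj : Essential f j) (hg : Good f i j) :
    {c | Essential (idMinor f i j) c} = {c | Essential f c} \ {i} := by
  ext c
  simp only [Set.mem_setOf_eq, Set.mem_diff, Set.mem_singleton_iff]
  constructor
  · intro hc
    exact minor_ess_subset hij hj hc
  · rintro ⟨hc, hci⟩
    by_cases hcj : c = j
    · subst hcj
      exact (minor_ess_right_iff hij).mpr hg.1
    · exact (minor_ess_other_iff hij hci hcj).mpr (hg.2 c hc hci hcj)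


/-! ### assembly: a good pair gives arity gap 1 -/

lemma essArity_minor_of_good {f : Fn n} {i j : Fin n} (hij : i ≠ j)
    (hj : Essential f j) (hi : Essential f i) (hg : Good f i j) :
    essArity (idMinor f i j) = essArity f - 1 := by
  unfold essArity
  rw [minor_ess_eq_of_good hij hj hg]
  exact Set.ncard_diff_singleton_of_mem (s := {c | Essential f c}) hi

lemma essArity_minor_le {f : Fn n} {i j : Fin n} (hij : i ≠ j)
    (hi : Essential f i) (hj : Essential f j) :
    essArity (idMinor f i j) ≤ essArity f - 1 := by
  unfold essArity
  have hsub : {c | Essential (idMinor f i j) c} ⊆ {c | Essential f c} \ {i} := by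
    intro c hc
    have := minor_ess_subset hij hj hc
    exact ⟨this.1, this.2⟩
  calc Set.ncard {c | Essential (idMinor f i j) c}
      ≤ ({c | Essential f c} \ {i}).ncard := Set.ncard_le_ncard hsub (Set.toFinite _)
    _ = essArity f - 1 := Set.ncard_diff_singleton_of_mem (s := {c | Essential f c}) hi

lemma main_of_good {f : Fn n} (hf : 2 ≤ essArity f)
    (hg : ∃ i j, i ≠ j ∧ Essential f i ∧ Essential f j ∧ Good f i j) :
    arityGap f = 1 ∧ ∃ i j : Fin n, i ≠ j ∧ Essential f i ∧ Essential f j ∧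
      essArity (idMinor f i j) = essArity f - 1 := by
  obtain ⟨i, j, hij, hi, hj, hgood⟩ := hg
  have hmin : essArity (idMinor f i j) = essArity f - 1 :=
    essArity_minor_of_good hij hj hi hgood
  set S : Set ℕ := {m : ℕ | ∃ i j : Fin n, i ≠ j ∧ Essential f i ∧ Essential f j ∧
      m = essArity (idMinor f i j)} with hS
  have hmem : essArity f - 1 ∈ S := ⟨i, j, hij, hi, hj, hmin.symm⟩
  have hbound : ∀ s ∈ S, s ≤ essArity f - 1 := by
    rintro s ⟨i', j', hij', hi', hj', rfl⟩
    exact essArity_minor_le hij' hi' hj'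
  have hsup : sSup S = essArity f - 1 := by
    apply le_antisymm
    · exact csSup_le ⟨_, hmem⟩ hbound
    · exact le_csSup ⟨essArity f - 1, hbound⟩ hmem
  constructor
  · unfold arityGap
    rw [← hS, hsup]
    omega
  · exact ⟨i, j, hij, hi, hj, hmin⟩


/-! ### the four special forms -/

def Forms (f : Fn n) : Prop :=
  (∃ (S : Finset (Fin n)) (c : ZMod 2), 2 ≤ S.card ∧
      ∀ x : Pt n, f x = (∑ i ∈ S, x i) + c) ∨
  (∃ (i j : Fin n) (c : ZMod 2), i ≠ j ∧
      ∀ x : Pt n, f x = x i * x j + x i + c) ∨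
  (∃ (i j k : Fin n) (c : ZMod 2), i ≠ j ∧ i ≠ k ∧ j ≠ k ∧
      ∀ x : Pt n, f x = x i * x j + x i * x k + x j * x k + c) ∨
  (∃ (i j k : Fin n) (c : ZMod 2), i ≠ j ∧ i ≠ k ∧ j ≠ k ∧
      ∀ x : Pt n, f x = x i * x j + x i * x k + x j * x k + x i + x j + c)

lemma zne {u v : ZMod 2} (h : u ≠ v) : v = u + 1 :=
  (by decide : ∀ u v : ZMod 2, u ≠ v → v = u + 1) u v h

/-! ### the all-null case -/

lemma one_add_one_z : (1 : ZMod 2) + 1 = 0 := by decide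

lemma flip_eq {f : Fn n} {a b : Fin n} (hnn : ¬ NN f a b)
    (x : Pt n) (hx : x a = x b) :
    f x = f (update (update x a (x a + 1)) b (x b + 1)) := by
  have hall : ∀ y, f (update (update y a 0) b 0) = f (update (update y a 1) b 1) := by
    intro y; by_contra hne; exact hnn ⟨y, hne⟩
  rcases zcases (x a) with h0 | h0
  · have hb0 : x b = 0 := by rw [← hx, h0]
    have i1 : update x a (0 : ZMod 2) = x := by rw [← h0]; exact update_eq_self a x
    have i2 : update x b (0 : ZMod 2) = x := by rw [← hb0]; exact update_eq_self b x
    have e1 : update (update x a (0:ZMod 2)) b 0 = x := by rw [i1, i2]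
    have e2 : update (update x a (x a + 1)) b (x b + 1) =
        update (update x a 1) b 1 := by
      rw [h0, hb0]; norm_num
    have := hall x
    rw [e1] at this
    rw [e2]
    exact this
  · have hb1 : x b = 1 := by rw [← hx, h0]
    have i1 : update x a (1 : ZMod 2) = x := by rw [← h0]; exact update_eq_self a x
    have i2 : update x b (1 : ZMod 2) = x := by rw [← hb1]; exact update_eq_self b x
    have e1 : update (update x a (1:ZMod 2)) b 1 = x := by rw [i1, i2]
    have e2 : update (update x a (x a + 1)) b (x b + 1) =
        update (update x a 0) b 0 := by
      rw [h0, hb1, one_add_one_z]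
    have := (hall x).symm
    rw [e1] at this
    rw [e2]
    exact this

/-- the essential variables as a `Finset` -/
noncomputable def EF (f : Fn n) : Finset (Fin n) :=
  (Set.toFinite {i | Essential f i}).toFinset

lemma mem_EF {f : Fn n} {c : Fin n} : c ∈ EF f ↔ Essential f c := by
  simp [EF]

lemma essArity_eq_card (f : Fn n) : essArity f = (EF f).card := by
  unfold essArity
  have h : {i | Essential f i} = ↑(EF f) := by ext c; simp [mem_EF]
  rw [h, Set.ncard_coe_finset]

/-- the set of essential coordinates where `x` is 1 -/
noncomputable def wtF (f : Fn n) (x : Pt n) : Finset (Fin n) :=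
  (Set.toFinite {e | Essential f e ∧ x e = 1}).toFinset

lemma mem_wtF {f : Fn n} {x : Pt n} {u : Fin n} :
    u ∈ wtF f x ↔ Essential f u ∧ x u = 1 := by simp [wtF]

/-- number of essential coordinates equal to 1 -/
noncomputable def wt (f : Fn n) (x : Pt n) : ℕ := (wtF f x).card

/-- supported on essential variables -/
def supp (f : Fn n) (x : Pt n) : Prop := ∀ e, ¬ Essential f e → x e = 0

lemma sum_eq_wt (f : Fn n) (z : Pt n) : ∑ e ∈ EF f, z e = (wt f z : ZMod 2) := by
  classical
  have hsplit := Finset.sum_filter_add_sum_filter_not (EF f) (fun e => z e = 1) z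
  have h1 : ∑ e ∈ (EF f).filter (fun e => z e = 1), z e = (wt f z : ZMod 2) := by
    have hset : (EF f).filter (fun e => z e = 1) = wtF f z := by
      ext u; simp [Finset.mem_filter, mem_EF, mem_wtF]
    rw [hset]
    unfold wt
    calc ∑ e ∈ wtF f z, z e = ∑ _e ∈ wtF f z, (1:ZMod 2) :=
          Finset.sum_congr rfl (fun e he => (mem_wtF.mp he).2)
      _ = (wtF f z).card • (1:ZMod 2) := Finset.sum_const 1
      _ = ((wtF f z).card : ZMod 2) := by rw [nsmul_eq_mul, mul_one]
  have h2 : ∑ e ∈ (EF f).filter (fun e => ¬ z e = 1), z e = 0 := by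
    apply Finset.sum_eq_zero
    intro e he
    rcases zcases (z e) with h | h
    · exact h
    · exact absurd h (Finset.mem_filter.mp he).2
  rw [← hsplit, h1, h2, add_zero]

lemma supp_wt_zero {f : Fn n} {x : Pt n} (hs : supp f x) (hw : wt f x = 0) :
    x = 0 := by
  have hempty : wtF f x = ∅ := Finset.card_eq_zero.mp hw
  funext u
  by_cases hu : Essential f u
  · rcases zcases (x u) with h | h
    · exact h
    · exfalso
      have : u ∈ wtF f x := mem_wtF.mpr ⟨hu, h⟩
      rw [hempty] at this
      exact absurd this (Finset.notMem_empty u)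
  · exact hs u hu

lemma supp_wt_one {f : Fn n} {x : Pt n} (hs : supp f x) (hw : wt f x = 1) :
    ∃ e, Essential f e ∧ x = update (0 : Pt n) e 1 := by
  obtain ⟨a, ha⟩ := Finset.card_eq_one.mp hw
  have haf : a ∈ wtF f x := by rw [ha]; exact Finset.mem_singleton_self a
  rw [mem_wtF] at haf
  refine ⟨a, haf.1, ?_⟩
  funext u
  by_cases hua : u = a
  · subst hua; rw [update_self]; exact haf.2
  · rw [update_of_ne hua]
    by_cases hu : Essential f u
    · rcases zcases (x u) with h | h
      · exact h
      · exfalso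
        have : u ∈ wtF f x := mem_wtF.mpr ⟨hu, h⟩
        rw [ha, Finset.mem_singleton] at this
        exact hua this
    · exact hs u hu

lemma descend {f : Fn n}
    (hnn : ∀ a b, Essential f a → Essential f b → a ≠ b → ¬ NN f a b)
    {x : Pt n} (hs : supp f x) (h2 : 2 ≤ wt f x) :
    ∃ x', supp f x' ∧ f x' = f x ∧ wt f x' + 2 = wt f x := by
  have hT2 : 1 < (wtF f x).card := h2
  obtain ⟨e, heT, e', he'T, hee⟩ := Finset.one_lt_card.mp hT2
  have hxe : x e = 1 := (mem_wtF.mp heT).2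
  have hxe' : x e' = 1 := (mem_wtF.mp he'T).2
  have hesse : Essential f e := (mem_wtF.mp heT).1
  have hesse' : Essential f e' := (mem_wtF.mp he'T).1
  set x' := update (update x e (0:ZMod 2)) e' 0 with hx'
  have hfx : f x = f x' := by
    have := flip_eq (hnn e e' hesse hesse' hee) x (by rw [hxe, hxe'])
    rw [hxe, hxe', one_add_one_z] at this
    exact this
  refine ⟨x', ?_, hfx.symm, ?_⟩
  · intro u hu
    by_cases hue' : u = e'
    · subst hue'; rw [hx', update_self]
    by_cases hue : u = e
    · subst hue; rw [hx', update_of_ne hue', update_self]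
    · rw [hx', update_of_ne hue', update_of_ne hue]
      exact hs u hu
  · have hfeq : wtF f x' = ((wtF f x).erase e).erase e' := by
      ext u
      rw [mem_wtF, Finset.mem_erase, Finset.mem_erase, mem_wtF]
      constructor
      · rintro ⟨huE, hu1⟩
        by_cases hue' : u = e'
        · exfalso; subst hue'
          rw [hx', update_self] at hu1
          exact absurd hu1 (by decide)
        by_cases hue : u = e
        · exfalso; subst hue
          rw [hx', update_of_ne hue', update_self] at hu1
          exact absurd hu1 (by decide)
        · rw [hx', update_of_ne hue', update_of_ne hue] at hu1
          exact ⟨hue', hue, huE, hu1⟩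
      · rintro ⟨hue', hue, huE, hu1⟩
        refine ⟨huE, ?_⟩
        rw [hx', update_of_ne hue', update_of_ne hue]
        exact hu1
    have he'Te : e' ∈ (wtF f x).erase e := Finset.mem_erase.mpr ⟨hee.symm, he'T⟩
    have hcard : wt f x' = wt f x - 2 := by
      unfold wt
      rw [hfeq, Finset.card_erase_of_mem he'Te, Finset.card_erase_of_mem heT]
      omega
    have hle : 2 ≤ wt f x := h2
    omega

lemma delta_eq {f : Fn n}
    (hnn : ∀ a b, Essential f a → Essential f b → a ≠ b → ¬ NN f a b)
    (hE3 : 3 ≤ (EF f).card)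
    {e e' : Fin n} (he : Essential f e) (he' : Essential f e') :
    f (update (0:Pt n) e 1) = f (update (0:Pt n) e' 1) := by
  by_cases hee : e = e'
  · rw [hee]
  have hcard : 0 < (((EF f).erase e).erase e').card := by
    have h1 : (EF f).card - 1 ≤ ((EF f).erase e).card := Finset.pred_card_le_card_erase
    have h2 : ((EF f).erase e).card - 1 ≤ (((EF f).erase e).erase e').card :=
      Finset.pred_card_le_card_erase
    omega
  obtain ⟨e'', he''⟩ := Finset.card_pos.mp hcard
  have he''e' : e'' ≠ e' := (Finset.mem_erase.mp he'').1
  have he''e : e'' ≠ e := (Finset.mem_erase.mp (Finset.mem_erase.mp he'').2).1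
  have hesse'' : Essential f e'' :=
    mem_EF.mp (Finset.mem_erase.mp (Finset.mem_erase.mp he'').2).2
  set d := update (0:Pt n) e 1 with hd
  have hne'e : ¬ e' = e := fun h => hee h.symm
  have hde' : d e' = 0 := by
    rw [hd]; simp [Function.update_apply, hne'e]
  have hde'' : d e'' = 0 := by
    rw [hd]; simp [Function.update_apply, he''e]
  have step1 := flip_eq (hnn e' e'' he' hesse'' he''e'.symm) d (by rw [hde', hde''])
  rw [hde', hde'', zero_add] at step1
  set z1 := update (update d e' (1:ZMod 2)) e'' 1 with hz1
  have hnee'' : ¬ e = e'' := fun h => he''e h.symm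
  have hz1e : z1 e = 1 := by
    rw [hz1, hd]
    simp [Function.update_apply, hnee'', hee]
  have hz1e'' : z1 e'' = 1 := by rw [hz1]; simp [Function.update_apply]
  have step2 := flip_eq (hnn e e'' he hesse'' he''e.symm) z1 (by rw [hz1e, hz1e''])
  rw [hz1e, hz1e'', one_add_one_z] at step2
  have hfinal : update (update z1 e (0:ZMod 2)) e'' 0 = update (0:Pt n) e' 1 := by
    funext u
    rw [hz1, hd]
    simp only [Function.update_apply, Pi.zero_apply]
    by_cases h1 : u = e'' <;> by_cases h2 : u = e <;> by_cases h3 : u = e' <;>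
      simp_all
  rw [step1, step2, hfinal]


lemma null_stage1 {f : Fn n}
    (hnn : ∀ a b, Essential f a → Essential f b → a ≠ b → ¬ NN f a b)
    (hE3 : 3 ≤ (EF f).card) :
    ∀ (N : ℕ) (x y : Pt n), wt f x + wt f y ≤ N → supp f x → supp f y →
      wt f x % 2 = wt f y % 2 → f x = f y := by
  intro N
  induction N with
  | zero =>
    intro x y hN hx hy hp
    have hx0 : wt f x = 0 := by omega
    have hy0 : wt f y = 0 := by omega
    rw [supp_wt_zero hx hx0, supp_wt_zero hy hy0]
  | succ N ih =>
    intro x y hN hx hy hp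
    by_cases h2x : 2 ≤ wt f x
    · obtain ⟨x', hs', hf', hw'⟩ := descend hnn hx h2x
      rw [← hf']
      exact ih x' y (by omega) hs' hy (by omega)
    by_cases h2y : 2 ≤ wt f y
    · obtain ⟨y', hs', hf', hw'⟩ := descend hnn hy h2y
      rw [show f y = f y' from hf'.symm]
      exact ih x y' (by omega) hx hs' (by omega)
    · have hxy : wt f x = wt f y := by omega
      rcases (by omega : wt f x = 0 ∨ wt f x = 1) with h0 | h1
      · rw [supp_wt_zero hx h0, supp_wt_zero hy (by omega)]
      · obtain ⟨e, he, hex⟩ := supp_wt_one hx h1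
        obtain ⟨e', he', hey⟩ := supp_wt_one hy (by omega)
        rw [hex, hey]
        exact delta_eq hnn hE3 he he'

lemma null_form_ge3 {f : Fn n}
    (hnn : ∀ a b, Essential f a → Essential f b → a ≠ b → ¬ NN f a b)
    (hE3 : 3 ≤ essArity f) : Forms f := by
  classical
  left
  rw [essArity_eq_card] at hE3
  -- supported version of any point
  set sp : Pt n → Pt n := fun x => (fun e => if Essential f e then x e else 0) with hsp
  have hagree : ∀ x, f x = f (sp x) := by
    intro x
    exact agree_on_ess f x (sp x) (fun i hi => by rw [hsp]; simp [hi])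
  have hsupp : ∀ x, supp f (sp x) := by
    intro x e he
    rw [hsp]; simp [he]
  have hsum : ∀ x, ∑ e ∈ EF f, x e = ∑ e ∈ EF f, sp x e := by
    intro x
    refine Finset.sum_congr rfl (fun e he => ?_)
    rw [hsp]; simp [mem_EF.mp he]
  obtain ⟨e0, he0⟩ := Finset.card_pos.mp (by omega : 0 < (EF f).card)
  have hesse0 : Essential f e0 := mem_EF.mp he0
  set d0 : Pt n := update (0 : Pt n) e0 1 with hd0
  have hsupp0 : supp f (0 : Pt n) := fun e _ => rfl
  have hsuppd : supp f d0 := by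
    intro e he
    rw [hd0, update_of_ne (fun h : e = e0 => he (h ▸ hesse0))]
    rfl
  have hwt0 : wt f (0 : Pt n) = 0 := by
    unfold wt
    rw [Finset.card_eq_zero]
    ext u
    simp only [mem_wtF, Finset.notMem_empty, iff_false]
    rintro ⟨-, h⟩
    simp only [Pi.zero_apply] at h
    exact absurd h (by decide)
  have hwtd : wt f d0 = 1 := by
    unfold wt
    rw [Finset.card_eq_one]
    refine ⟨e0, ?_⟩
    ext u
    rw [mem_wtF, Finset.mem_singleton]
    constructor
    · rintro ⟨hu, h1⟩
      by_contra hne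
      rw [hd0, update_of_ne hne] at h1
      simp only [Pi.zero_apply] at h1
      exact absurd h1 (by decide)
    · rintro rfl
      exact ⟨hesse0, by rw [hd0, update_self]⟩
  -- the two parity values
  have hval : ∀ x : Pt n, f x = if wt f (sp x) % 2 = 0 then f 0 else f d0 := by
    intro x
    rw [hagree x]
    by_cases hparity : wt f (sp x) % 2 = 0
    · rw [if_pos hparity]
      exact null_stage1 hnn hE3 (wt f (sp x) + wt f 0) (sp x) 0 le_rfl
        (hsupp x) hsupp0 (by rw [hwt0]; omega)
    · rw [if_neg hparity]
      exact null_stage1 hnn hE3 (wt f (sp x) + wt f d0) (sp x) d0 le_rfl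
        (hsupp x) hsuppd (by rw [hwtd]; omega)
  have hne : f d0 ≠ f 0 := by
    intro heq
    have hconst : ∀ x : Pt n, f x = f 0 := by
      intro x
      rw [hval x]
      split <;> simp [heq]
    obtain ⟨x0, hx0⟩ := ess_iff.mp hesse0
    rw [hconst (update x0 e0 0), hconst (update x0 e0 1)] at hx0
    exact hx0 rfl
  refine ⟨EF f, f 0, by omega, ?_⟩
  intro x
  rw [hval x, hsum x, sum_eq_wt f (sp x)]
  rcases Nat.even_or_odd (wt f (sp x)) with he | ho
  · rw [if_pos (Nat.even_iff.mp he)]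
    have hc : ((wt f (sp x) : ℕ) : ZMod 2) = 0 := by
      obtain ⟨m, hm⟩ := he
      rw [hm]
      push_cast
      ring_nf
      rw [show ((2:ZMod 2)) = 0 from by decide]
      ring
    rw [hc, zero_add]
  · rw [if_neg (by rw [Nat.odd_iff.mp ho]; omega)]
    have hc : ((wt f (sp x) : ℕ) : ZMod 2) = 1 := by
      obtain ⟨m, hm⟩ := ho
      rw [hm]
      push_cast
      rw [show ((2:ZMod 2)) = 0 from by decide]
      ring
    rw [hc, zne (show f 0 ≠ f d0 from fun h => hne h.symm)]
    ring


lemma null_form2 {f : Fn n}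
    (hnn : ∀ a b, Essential f a → Essential f b → a ≠ b → ¬ NN f a b)
    (h2 : essArity f = 2) : Forms f := by
  obtain ⟨i, j, hij, hE⟩ := Set.ncard_eq_two.mp h2
  have hi : Essential f i := by
    have : i ∈ {c | Essential f c} := by rw [hE]; exact Set.mem_insert i {j}
    exact this
  have hj : Essential f j := by
    have : j ∈ {c | Essential f c} := by
      rw [hE]; exact Set.mem_insert_of_mem i rfl
    exact this
  set F : ZMod 2 → ZMod 2 → ZMod 2 :=
    fun a b => f (update (update (0:Pt n) i a) j b) with hFdef
  have REP : ∀ x : Pt n, f x = F (x i) (x j) := by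
    intro x
    refine agree_on_ess f x _ (fun c hc => ?_)
    have hcij : c = i ∨ c = j := by
      have : c ∈ {c | Essential f c} := hc
      rw [hE] at this
      simpa using this
    rcases hcij with rfl | rfl
    · rw [update_of_ne hij, update_self]
    · rw [update_self]
  have hF : F 0 0 = F 1 1 := by
    by_contra hne
    exact hnn i j hi hj hij ⟨0, hne⟩
  have hessi : ∃ b, F 0 b ≠ F 1 b := by
    obtain ⟨x, hx⟩ := ess_iff.mp hi
    refine ⟨x j, ?_⟩
    rw [REP (update x i 0), REP (update x i 1)] at hx
    rwa [update_self, update_of_ne hij.symm, update_self,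
      update_of_ne hij.symm] at hx
  by_cases hbc : F 0 1 = F 1 0
  · -- parity form
    have hab : F 0 0 ≠ F 0 1 := by
      obtain ⟨b', hb'⟩ := hessi
      rcases zcases b' with rfl | rfl
      · rw [show F 1 0 = F 0 1 from hbc.symm] at hb'
        exact hb'
      · rw [← hF] at hb'
        exact fun h => hb' h.symm
    left
    refine ⟨{i, j}, F 0 0, ?_, ?_⟩
    · rw [Finset.card_insert_of_notMem (by simpa using hij), Finset.card_singleton]
    · intro x
      rw [Finset.sum_pair hij, REP x]
      rcases zcases (x i) with h | h <;> rcases zcases (x j) with h' | h' <;>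
        rw [h, h']
      · generalize F 0 0 = u; revert u; decide
      · rw [zne hab]; generalize F 0 0 = u; revert u; decide
      · rw [show F 1 0 = F 0 1 from hbc.symm, zne hab]
        generalize F 0 0 = u; revert u; decide
      · rw [← hF]; generalize F 0 0 = u; revert u; decide
  · right; left
    by_cases hac : F 0 0 = F 1 0
    · -- f = x j * x i + x j + c
      have hb : F 0 1 = F 0 0 + 1 := by
        have : F 0 0 ≠ F 0 1 := by
          rw [hac]; exact fun h => hbc h.symm
        exact zne this
      refine ⟨j, i, F 0 0, hij.symm, ?_⟩
      intro x
      rw [REP x]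
      rcases zcases (x i) with h | h <;> rcases zcases (x j) with h' | h' <;>
        rw [h, h']
      · generalize F 0 0 = u; revert u; decide
      · rw [hb]; generalize F 0 0 = u; revert u; decide
      · rw [← hac]; generalize F 0 0 = u; revert u; decide
      · rw [← hF]; generalize F 0 0 = u; revert u; decide
    · -- f = x i * x j + x i + c
      have hcval : F 1 0 = F 0 0 + 1 := zne hac
      have hb : F 0 1 = F 0 0 := by
        by_contra hne
        have hne' : F 0 0 ≠ F 0 1 := fun h => hne h.symm
        exact hbc (by rw [zne hne', ← hcval])
      refine ⟨i, j, F 0 0, hij, ?_⟩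
      intro x
      rw [REP x]
      rcases zcases (x i) with h | h <;> rcases zcases (x j) with h' | h' <;>
        rw [h, h']
      · generalize F 0 0 = u; revert u; decide
      · rw [hb]; generalize F 0 0 = u; revert u; decide
      · rw [hcval]; generalize F 0 0 = u; revert u; decide
      · rw [← hF]; generalize F 0 0 = u; revert u; decide


/-! ### triple restrictions -/

lemma noess_update {g : Fn n} {i : Fin n} (h : ¬ Essential g i) (x : Pt n) (v : ZMod 2) :
    g (update x i v) = g x := not_ess_iff.mp h x v

lemma R2_symm (f : Fn n) {i j : Fin n} (hij : i ≠ j) (a b : ZMod 2) :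
    R2 f i j a b = R2 f j i b a := by
  funext x
  simp only [R2]
  rw [update_comm hij]

lemma covS_symm (f : Fn n) {i j : Fin n} (hij : i ≠ j) :
    {c | Cov f j i c} = {c | Cov f i j c} := by
  ext c
  simp only [Set.mem_setOf_eq, Cov]
  rw [R2_symm f hij.symm 0 0, R2_symm f hij.symm 1 1]

def G (f : Fn n) (i j k : Fin n) (a b c : ZMod 2) : Fn n :=
  fun x => f (update (update (update x k c) i a) j b)

lemma G_swap {f : Fn n} {i j k : Fin n} (hij : i ≠ j) (a b c : ZMod 2) :
    G f j i k a b c = G f i j k b a c := by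
  funext x
  simp only [G]
  rw [update_comm hij.symm]

lemma G_upd_k {f : Fn n} {i j k : Fin n} (a b c : ZMod 2) (x : Pt n) (v : ZMod 2) :
    G f i j k a b c (update x k v) = G f i j k a b c x := by
  simp only [G, update_idem]

lemma G_upd_i {f : Fn n} {i j k : Fin n} (hki : k ≠ i) (a b c : ZMod 2)
    (x : Pt n) (v : ZMod 2) :
    G f i j k a b c (update x i v) = G f i j k a b c x := by
  simp only [G]
  rw [update_comm hki.symm, update_idem]

lemma G_upd_j {f : Fn n} {i j k : Fin n} (hkj : k ≠ j) (hij : i ≠ j) (a b c : ZMod 2)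
    (x : Pt n) (v : ZMod 2) :
    G f i j k a b c (update x j v) = G f i j k a b c x := by
  simp only [G]
  rw [update_comm hkj.symm, update_comm hij.symm, update_idem]

/-- `f` at a point in terms of `G` -/
lemma f_eq_G {f : Fn n} {i j k : Fin n} (hki : k ≠ i) (hkj : k ≠ j) (hij : i ≠ j)
    (x : Pt n) : f x = G f i j k (x i) (x j) (x k) x := by
  simp only [G]
  rw [show x i = (update x k (x k)) i from (update_of_ne hki.symm _ x).symm]
  rw [update_eq_self, update_eq_self]
  rw [show x j = (update x i (x i)) j from (update_of_ne hij.symm _ x).symm]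
  rw [update_eq_self, update_eq_self]

lemma fk_eq_G {f : Fn n} {i j k : Fin n} (hki : k ≠ i) (hkj : k ≠ j) (hij : i ≠ j)
    (x : Pt n) (v : ZMod 2) : f (update x k v) = G f i j k (x i) (x j) v x := by
  have h := f_eq_G (f := f) hki hkj hij (update x k v)
  rw [update_of_ne hki.symm, update_of_ne hkj.symm, Function.update_self,
    G_upd_k] at h
  exact h

/-- `R2 f j k a b` in terms of `G` -/
lemma R2jk_eq_G {f : Fn n} {i j k : Fin n} (hki : k ≠ i) (hkj : k ≠ j) (hij : i ≠ j)
    (a b : ZMod 2) (x : Pt n) :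
    R2 f j k a b x = G f i j k (x i) a b x := by
  simp only [R2, G]
  have h1 : update (update x k b) i (x i) = update x k b := by
    rw [show x i = (update x k b) i from (update_of_ne hki.symm _ x).symm,
      update_eq_self]
  rw [h1, update_comm hkj.symm]

/-- `R2 f i k a b` in terms of `G` -/
lemma R2ik_eq_G {f : Fn n} {i j k : Fin n} (hki : k ≠ i) (hkj : k ≠ j) (hij : i ≠ j)
    (a b : ZMod 2) (x : Pt n) :
    R2 f i k a b x = G f i j k a (x j) b x := by
  simp only [R2, G]
  have h1 : update (update (update x k b) i a) j (x j) =
      update (update x k b) i a := by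
    rw [show x j = (update (update x k b) i a) j by
      rw [update_of_ne hij.symm, update_of_ne hkj.symm], update_eq_self]
  rw [h1, update_comm hki.symm]

/-- splitting essentiality along another coordinate -/
lemma ess_split {g : Fn n} {c c' : Fin n} (hcc : c' ≠ c) (h : Essential g c') :
    Essential (rst g c 0) c' ∨ Essential (rst g c 1) c' := by
  obtain ⟨x, hx⟩ := ess_iff.mp h
  have key : ∀ b : ZMod 2, g (update x c' b) = rst g c (x c) (update x c' b) := by
    intro b
    simp only [rst]
    rw [show x c = (update x c' b) c from (update_of_ne hcc.symm _ x).symm,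
      update_eq_self]
  rw [key 0, key 1] at hx
  rcases zcases (x c) with h' | h' <;> rw [h'] at hx
  · exact Or.inl (ess_iff.mpr ⟨x, hx⟩)
  · exact Or.inr (ess_iff.mpr ⟨x, hx⟩)


/-! ### the improvement step -/

lemma step_lemma {f : Fn n} {i j k : Fin n}
    (hij : i ≠ j) (hki : k ≠ i) (hkj : k ≠ j)
    (hi : Essential f i) (hj : Essential f j) (hk : Essential f k)
    (hdead0 : ¬ Essential (R2 f i j 0 0) k) (hdead1 : ¬ Essential (R2 f i j 1 1) k)
    (hmax : ∀ a b : Fin n, a ≠ b → Essential f a → Essential f b → NN f a b →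
        ({c | Cov f i j c}).ncard < ({c | Cov f a b c}).ncard → False) :
    ((∀ x, G f i j k 0 1 1 x = R2 f i j 0 0 x) ∧
     (∀ x, G f i j k 1 0 0 x = R2 f i j 1 1 x)) ∨
    ((∀ x, G f i j k 1 0 0 x = R2 f i j 0 0 x) ∧
     (∀ x, G f i j k 0 1 1 x = R2 f i j 1 1 x)) := by
  classical
  set A := R2 f i j 0 0 with hA
  set B := R2 f i j 1 1 with hB
  have hG00 : ∀ (c : ZMod 2) (x : Pt n), G f i j k 0 0 c x = A x := by
    intro c x
    have : G f i j k 0 0 c x = A (update x k c) := by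
      simp only [G, hA, R2, rst]
    rw [this, noess_update hdead0]
  have hG11 : ∀ (c : ZMod 2) (x : Pt n), G f i j k 1 1 c x = B x := by
    intro c x
    have : G f i j k 1 1 c x = B (update x k c) := by
      simp only [G, hB, R2, rst]
    rw [this, noess_update hdead1]
  by_cases hFa : (∀ x, G f i j k 0 1 1 x = A x) ∧ (∀ x, G f i j k 1 0 0 x = B x)
  · exact Or.inl hFa
  by_cases hFb : (∀ x, G f i j k 1 0 0 x = A x) ∧ (∀ x, G f i j k 0 1 1 x = B x)
  · exact Or.inr hFb
  exfalso
  -- the pair (j, k) is non-null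
  have hNNjk : NN f j k := by
    rcases not_and_or.mp hFa with h | h
    · obtain ⟨x, hx⟩ := not_forall.mp h
      refine ⟨update x i 0, ?_⟩
      rw [R2jk_eq_G hki hkj hij, R2jk_eq_G hki hkj hij, Function.update_self,
        G_upd_i hki, G_upd_i hki, hG00]
      exact fun hcon => hx hcon.symm
    · obtain ⟨x, hx⟩ := not_forall.mp h
      refine ⟨update x i 1, ?_⟩
      rw [R2jk_eq_G hki hkj hij, R2jk_eq_G hki hkj hij, Function.update_self,
        G_upd_i hki, G_upd_i hki, hG11]
      exact hx
  -- i is covered by the pair (j, k)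
  have hicov : Cov f j k i := by
    rcases not_and_or.mp hFb with h | h
    · obtain ⟨x, hx⟩ := not_forall.mp h
      left
      rw [ess_iff]
      refine ⟨x, ?_⟩
      rw [R2jk_eq_G hki hkj hij, R2jk_eq_G hki hkj hij, Function.update_self,
        Function.update_self, G_upd_i hki, G_upd_i hki, hG00]
      exact fun hcon => hx hcon.symm
    · obtain ⟨x, hx⟩ := not_forall.mp h
      right
      rw [ess_iff]
      refine ⟨x, ?_⟩
      rw [R2jk_eq_G hki hkj hij, R2jk_eq_G hki hkj hij, Function.update_self,
        Function.update_self, G_upd_i hki, G_upd_i hki, hG11]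
      exact hx
  -- the cover of (i,j) is contained in the cover of (j,k)
  have hsub : {c | Cov f i j c} ⊆ {c | Cov f j k c} := by
    intro c hc
    have hcine : c ≠ i := fun h => not_cov_left (h ▸ hc)
    have hcjne : c ≠ j := fun h => not_cov_right hij (h ▸ hc)
    have hckne : c ≠ k := by
      intro h
      subst h
      rcases hc with h' | h'
      · exact hdead0 h'
      · exact hdead1 h'
    rcases hc with h' | h'
    · -- Essential A c
      obtain ⟨y, hy⟩ := ess_iff.mp h'
      left
      rw [ess_iff]
      refine ⟨update y i 0, ?_⟩
      have key : ∀ b : ZMod 2,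
          R2 f j k 0 0 (update (update y i 0) c b) = A (update y c b) := by
        intro b
        rw [R2jk_eq_G hki hkj hij, update_of_ne hcine.symm, Function.update_self,
          update_comm hcine.symm, G_upd_i hki, hG00]
      rw [key 0, key 1]
      exact hy
    · obtain ⟨y, hy⟩ := ess_iff.mp h'
      right
      rw [ess_iff]
      refine ⟨update y i 1, ?_⟩
      have key : ∀ b : ZMod 2,
          R2 f j k 1 1 (update (update y i 1) c b) = B (update y c b) := by
        intro b
        rw [R2jk_eq_G hki hkj hij, update_of_ne hcine.symm, Function.update_self,
          update_comm hcine.symm, G_upd_i hki, hG11]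
      rw [key 0, key 1]
      exact hy
  -- strict inclusion and contradiction with maximality
  have hssub : {c | Cov f i j c} ⊂ {c | Cov f j k c} := by
    refine ⟨hsub, fun hsup => ?_⟩
    exact not_cov_left (hsup hicov)
  exact hmax j k hkj.symm hj hk hNNjk (Set.ncard_lt_ncard hssub (Set.toFinite _))


/-! ### evaluation lemmas for the pair (k, c) -/

lemma AB_all_eq {A B : Fn n} {c : Fin n}
    (h0 : ∀ y, A (update y c 0) = B (update y c 0))
    (h1 : ∀ y, A (update y c 1) = B (update y c 1)) : ∀ y, A y = B y := by
  intro y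
  rcases zcases (y c) with h | h
  · have hy : update y c 0 = y := by rw [← h]; exact update_eq_self c y
    have := h0 y
    rwa [hy] at this
  · have hy : update y c 1 = y := by rw [← h]; exact update_eq_self c y
    have := h1 y
    rwa [hy] at this

lemma R2kc_eq {f : Fn n} {i j k c : Fin n} (hki : k ≠ i) (hkj : k ≠ j)
    (hij : i ≠ j) (hck : c ≠ k) (hci : c ≠ i) (hcj : c ≠ j)
    (v : ZMod 2) (z : Pt n) :
    R2 f k c v v z = G f i j k (z i) (z j) v (update z c v) := by
  simp only [R2, G]
  set P := update (update z c v) k v with hP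
  have hPi : P i = z i := by
    rw [hP, update_of_ne hki.symm, update_of_ne hci.symm]
  have hPj : P j = z j := by
    rw [hP, update_of_ne hkj.symm, update_of_ne hcj.symm]
  rw [show z i = P i from hPi.symm, update_eq_self]
  rw [show z j = P j from hPj.symm, update_eq_self]
  rw [hP, update_comm hck.symm]

/-- evaluation with an outer `i`-update -/
lemma R2kc_eval_i {f : Fn n} {i j k c : Fin n} (hki : k ≠ i) (hkj : k ≠ j)
    (hij : i ≠ j) (hck : c ≠ k) (hci : c ≠ i) (hcj : c ≠ j)
    (v s w : ZMod 2) (y : Pt n) :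
    R2 f k c v v (update (update y j s) i w) =
      G f i j k w s v (update y c v) := by
  rw [R2kc_eq hki hkj hij hck hci hcj]
  rw [Function.update_self, update_of_ne hij.symm, Function.update_self]
  rw [update_comm hci.symm, G_upd_i hki, update_comm hcj.symm, G_upd_j hkj hij]

/-- evaluation with an outer `j`-update -/
lemma R2kc_eval_j {f : Fn n} {i j k c : Fin n} (hki : k ≠ i) (hkj : k ≠ j)
    (hij : i ≠ j) (hck : c ≠ k) (hci : c ≠ i) (hcj : c ≠ j)
    (v s w : ZMod 2) (y : Pt n) :
    R2 f k c v v (update (update y i w) j s) =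
      G f i j k w s v (update y c v) := by
  rw [R2kc_eq hki hkj hij hck hci hcj]
  rw [Function.update_self, update_of_ne hij, Function.update_self]
  rw [update_comm hcj.symm, G_upd_j hkj hij, update_comm hci.symm, G_upd_i hki]


lemma z_or (c t : ZMod 2) : c = t ∨ c = t + 1 := by revert c t; decide

/-! ### the final case analysis -/

lemma final_case {f : Fn n} {i j k : Fin n}
    (hij : i ≠ j) (hki : k ≠ i) (hkj : k ≠ j)
    (hi : Essential f i) (hj : Essential f j) (hk : Essential f k)
    (t : ZMod 2)
    (h00 : ∀ (c : ZMod 2) (x : Pt n), G f i j k 0 0 c x = R2 f i j 0 0 x)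
    (h11 : ∀ (c : ZMod 2) (x : Pt n), G f i j k 1 1 c x = R2 f i j 1 1 x)
    (hmidA : ∀ x, G f i j k 0 1 t x = R2 f i j 0 0 x)
    (hmidA' : ∀ x, G f i j k 1 0 t x = R2 f i j 0 0 x)
    (hmidB : ∀ x, G f i j k 0 1 (t+1) x = R2 f i j 1 1 x)
    (hmidB' : ∀ x, G f i j k 1 0 (t+1) x = R2 f i j 1 1 x)
    (hNN : NN f i j) :
    (∃ a b, a ≠ b ∧ Essential f a ∧ Essential f b ∧ Good f a b) ∨ Forms f := by
  classical
  set A := R2 f i j 0 0 with hA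
  set B := R2 f i j 1 1 with hB
  have hAB : ∃ x, A x ≠ B x := hNN
  have hABne : ¬ ∀ y, A y = B y := by
    obtain ⟨x, hx⟩ := hAB
    exact fun h => hx (h x)
  have hIA0 : ∀ x, G f i j k 0 (t+1) 0 x = A x := by
    rcases zcases t with rfl | rfl
    · intro x; rw [show (0:ZMod 2)+1 = 1 from by decide]; exact hmidA x
    · intro x; rw [show (1:ZMod 2)+1 = 0 from by decide]; exact h00 0 x
  have hIB0 : ∀ x, G f i j k 1 (t+1) 0 x = B x := by
    rcases zcases t with rfl | rfl
    · intro x; rw [show (0:ZMod 2)+1 = 1 from by decide]; exact h11 0 x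
    · intro x
      have := hmidB' x
      rwa [show (1:ZMod 2)+1 = 0 from by decide] at this
  have hIA1 : ∀ x, G f i j k 0 t 1 x = A x := by
    rcases zcases t with rfl | rfl
    · intro x; exact h00 1 x
    · intro x; exact hmidA x
  have hIB1 : ∀ x, G f i j k 1 t 1 x = B x := by
    rcases zcases t with rfl | rfl
    · intro x
      have := hmidB' x
      rwa [show (0:ZMod 2)+1 = 1 from by decide] at this
    · intro x; exact h11 1 x
  have hJA0 : ∀ x, G f i j k (t+1) 0 0 x = A x := by
    rcases zcases t with rfl | rfl
    · intro x; rw [show (0:ZMod 2)+1 = 1 from by decide]; exact hmidA' x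
    · intro x; rw [show (1:ZMod 2)+1 = 0 from by decide]; exact h00 0 x
  have hJB0 : ∀ x, G f i j k (t+1) 1 0 x = B x := by
    rcases zcases t with rfl | rfl
    · intro x; rw [show (0:ZMod 2)+1 = 1 from by decide]; exact h11 0 x
    · intro x
      have := hmidB x
      rwa [show (1:ZMod 2)+1 = 0 from by decide] at this
  have hJA1 : ∀ x, G f i j k t 0 1 x = A x := by
    rcases zcases t with rfl | rfl
    · intro x; exact h00 1 x
    · intro x; exact hmidA' x
  have hJB1 : ∀ x, G f i j k t 1 1 x = B x := by
    rcases zcases t with rfl | rfl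
    · intro x
      have := hmidB x
      rwa [show (0:ZMod 2)+1 = 1 from by decide] at this
    · intro x; exact h11 1 x
  have htab : ∀ a b c : ZMod 2, (∀ x, G f i j k a b c x = A x) ∨
      (∀ x, G f i j k a b c x = B x) := by
    intro a b c
    rcases zcases a with rfl | rfl <;> rcases zcases b with rfl | rfl
    · exact Or.inl (h00 c)
    · rcases z_or c t with h | h
      · subst h; exact Or.inl hmidA
      · subst h; exact Or.inr hmidB
    · rcases z_or c t with h | h
      · subst h; exact Or.inl hmidA'
      · subst h; exact Or.inr hmidB'
    · exact Or.inr (h11 c)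
  by_cases hc4 : ∃ c', Essential f c' ∧ c' ≠ i ∧ c' ≠ j ∧ c' ≠ k
  · -- there is a fourth essential variable: the pair (k, c) is good
    obtain ⟨c, hc, hci, hcj, hck⟩ := hc4
    left
    refine ⟨k, c, fun h => hck h.symm, hk, hc, ?_, ?_⟩
    · -- NN f k c
      by_contra hnn2
      have hall : ∀ z, R2 f k c 0 0 z = R2 f k c 1 1 z := by
        intro z
        by_contra hne
        exact hnn2 ⟨z, hne⟩
      have hrel : ∀ (a b : ZMod 2) (y : Pt n),
          G f i j k a b 0 (update y c 0) = G f i j k a b 1 (update y c 1) := by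
        intro a b y
        have h := hall (update (update y j b) i a)
        rwa [R2kc_eval_i hki hkj hij hck hci hcj,
          R2kc_eval_i hki hkj hij hck hci hcj] at h
      have hA01 : ∀ y, A (update y c 0) = A (update y c 1) := by
        intro y
        have := hrel 0 0 y
        rwa [h00, h00] at this
      have hB01 : ∀ y, B (update y c 0) = B (update y c 1) := by
        intro y
        have := hrel 1 1 y
        rwa [h11, h11] at this
      have hmix : (∀ y, A (update y c 0) = B (update y c 1)) ∨
          (∀ y, B (update y c 0) = A (update y c 1)) := by
        rcases zcases t with rfl | rfl
        · left
          intro y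
          have h2 : ∀ x, G f i j k 0 1 1 x = B x := by
            intro x
            have := hmidB x
            rwa [show (0:ZMod 2)+1 = 1 from by decide] at this
          have := hrel 0 1 y
          rwa [hmidA, h2] at this
        · right
          intro y
          have h2 : ∀ x, G f i j k 0 1 0 x = B x := by
            intro x
            have := hmidB x
            rwa [show (1:ZMod 2)+1 = 0 from by decide] at this
          have := hrel 0 1 y
          rwa [h2, hmidA] at this
      refine hABne (AB_all_eq (c := c) ?_ ?_)
      · intro y
        rcases hmix with hm | hm
        · rw [hm y]
          exact (hB01 y).symm
        · rw [hA01 y]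
          exact (hm y).symm
      · intro y
        rcases hmix with hm | hm
        · rw [← hA01 y]
          exact hm y
        · rw [← hm y]
          exact hB01 y
    · -- coverage for the pair (k, c)
      intro c' hc' hc'k hc'c
      by_cases hc'i : c' = i
      · rw [hc'i]
        by_contra hno
        rw [Cov, not_or] at hno
        obtain ⟨hn0, hn1⟩ := hno
        have h0v := not_ess_iff.mp hn0
        have h1v := not_ess_iff.mp hn1
        refine hABne (AB_all_eq (c := c) ?_ ?_)
        · intro y
          have e0 : R2 f k c 0 0 (update (update y j (t+1)) i 0) =
              R2 f k c 0 0 (update (update y j (t+1)) i 1) := by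
            rw [h0v, h0v]
          rw [R2kc_eval_i hki hkj hij hck hci hcj,
            R2kc_eval_i hki hkj hij hck hci hcj, hIA0, hIB0] at e0
          exact e0
        · intro y
          have e1 : R2 f k c 1 1 (update (update y j t) i 0) =
              R2 f k c 1 1 (update (update y j t) i 1) := by
            rw [h1v, h1v]
          rw [R2kc_eval_i hki hkj hij hck hci hcj,
            R2kc_eval_i hki hkj hij hck hci hcj, hIA1, hIB1] at e1
          exact e1
      by_cases hc'j : c' = j
      · rw [hc'j]
        by_contra hno
        rw [Cov, not_or] at hno
        obtain ⟨hn0, hn1⟩ := hno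
        have h0v := not_ess_iff.mp hn0
        have h1v := not_ess_iff.mp hn1
        refine hABne (AB_all_eq (c := c) ?_ ?_)
        · intro y
          have e0 : R2 f k c 0 0 (update (update y i (t+1)) j 0) =
              R2 f k c 0 0 (update (update y i (t+1)) j 1) := by
            rw [h0v, h0v]
          rw [R2kc_eval_j hki hkj hij hck hci hcj,
            R2kc_eval_j hki hkj hij hck hci hcj, hJA0, hJB0] at e0
          exact e0
        · intro y
          have e1 : R2 f k c 1 1 (update (update y i t) j 0) =
              R2 f k c 1 1 (update (update y i t) j 1) := by
            rw [h1v, h1v]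
          rw [R2kc_eval_j hki hkj hij hck hci hcj,
            R2kc_eval_j hki hkj hij hck hci hcj, hJA1, hJB1] at e1
          exact e1
      · -- a generic variable
        have hIc' : i ≠ c' := Ne.symm hc'i
        have hJc' : j ≠ c' := Ne.symm hc'j
        have hKc' : k ≠ c' := Ne.symm hc'k
        have hesscAB : Essential A c' ∨ Essential B c' := by
          obtain ⟨x, hx⟩ := ess_iff.mp hc'
          have key : ∀ b : ZMod 2, f (update x c' b) =
              G f i j k (x i) (x j) (x k) (update x c' b) := by
            intro b
            have h := f_eq_G (f := f) hki hkj hij (update x c' b)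
            rwa [update_of_ne hIc', update_of_ne hJc', update_of_ne hKc'] at h
          rw [key 0, key 1] at hx
          rcases htab (x i) (x j) (x k) with h | h
          · left
            exact ess_iff.mpr ⟨x, by rw [h, h] at hx; exact hx⟩
          · right
            exact ess_iff.mpr ⟨x, by rw [h, h] at hx; exact hx⟩
        have main : ∀ (D : Fn n) (a : ZMod 2)
            (hD : ∀ (ct : ZMod 2) (x : Pt n), G f i j k a a ct x = D x),
            Essential D c' → Cov f k c c' := by
          intro D a hD hssD
          rcases ess_split hc'c hssD with h' | h'
          · left
            rw [ess_iff]
            obtain ⟨y, hy⟩ := ess_iff.mp h'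
            refine ⟨update (update y j a) i a, ?_⟩
            have key : ∀ b : ZMod 2,
                R2 f k c 0 0 (update (update (update y j a) i a) c' b) =
                  rst D c 0 (update y c' b) := by
              intro b
              have hpt : update (update (update y j a) i a) c' b =
                  update (update (update y c' b) j a) i a := by
                rw [update_comm hIc', update_comm hJc']
              rw [hpt, R2kc_eval_i hki hkj hij hck hci hcj]
              have := hD 0 (update (update y c' b) c 0)
              rw [this]
              rfl
            rw [key 0, key 1]
            exact hy
          · right
            rw [ess_iff]
            obtain ⟨y, hy⟩ := ess_iff.mp h'
            refine ⟨update (update y j a) i a, ?_⟩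
            have key : ∀ b : ZMod 2,
                R2 f k c 1 1 (update (update (update y j a) i a) c' b) =
                  rst D c 1 (update y c' b) := by
              intro b
              have hpt : update (update (update y j a) i a) c' b =
                  update (update (update y c' b) j a) i a := by
                rw [update_comm hIc', update_comm hJc']
              rw [hpt, R2kc_eval_i hki hkj hij hck hci hcj]
              have := hD 1 (update (update y c' b) c 1)
              rw [this]
              rfl
            rw [key 0, key 1]
            exact hy
        rcases hesscAB with h' | h'
        · exact main A 0 h00 h'
        · exact main B 1 h11 h'
  · -- no fourth essential variable: f is of form 3 or 4
    right
    push_neg at hc4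
    have hAindepk : ∀ (x : Pt n) (v : ZMod 2), A (update x k v) = A x := by
      intro x v
      have h := h00 v x
      simp only [G] at h
      exact h
    have hBindepk : ∀ (x : Pt n) (v : ZMod 2), B (update x k v) = B x := by
      intro x v
      have h := h11 v x
      simp only [G] at h
      exact h
    have hnoA : ∀ u, ¬ Essential A u := by
      intro u hu
      by_cases hui : u = i
      · subst hui; exact not_ess_R2_left hu
      by_cases huj : u = j
      · subst huj; exact not_ess_R2_right hij hu
      by_cases huk : u = k
      · subst huk
        exact (not_ess_iff.mpr (fun x a => hAindepk x a)) hu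
      · exact huk (hc4 u (ess_R2 hui huj hu) hui huj)
    have hnoB : ∀ u, ¬ Essential B u := by
      intro u hu
      by_cases hui : u = i
      · subst hui; exact not_ess_R2_left hu
      by_cases huj : u = j
      · subst huj; exact not_ess_R2_right hij hu
      by_cases huk : u = k
      · subst huk
        exact (not_ess_iff.mpr (fun x a => hBindepk x a)) hu
      · exact huk (hc4 u (ess_R2 hui huj hu) hui huj)
    have hconstA : ∀ x, A x = A 0 := fun x => const_of_no_ess hnoA x 0
    have hconstB : ∀ x, B x = B 0 := fun x => const_of_no_ess hnoB x 0
    have hab : A 0 ≠ B 0 := by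
      obtain ⟨x, hx⟩ := hAB
      rwa [hconstA x, hconstB x] at hx
    have hb : B 0 = A 0 + 1 := zne hab
    rcases zcases t with rfl | rfl
    · -- majority : form 3
      right; right; left
      refine ⟨i, j, k, A 0, hij, Ne.symm hki, Ne.symm hkj, ?_⟩
      have hm1 : ∀ x, G f i j k 0 1 1 x = B x := by
        intro x
        have := hmidB x
        rwa [show (0:ZMod 2)+1 = 1 from by decide] at this
      have hm2 : ∀ x, G f i j k 1 0 1 x = B x := by
        intro x
        have := hmidB' x
        rwa [show (0:ZMod 2)+1 = 1 from by decide] at this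
      intro x
      rw [f_eq_G (f := f) hki hkj hij x]
      rcases zcases (x i) with h | h <;> rcases zcases (x j) with h' | h' <;>
        rcases zcases (x k) with h'' | h'' <;> rw [h, h', h'']
      · rw [h00, hconstA x]; generalize A 0 = u; revert u; decide
      · rw [h00, hconstA x]; generalize A 0 = u; revert u; decide
      · rw [hmidA, hconstA x]; generalize A 0 = u; revert u; decide
      · rw [hm1, hconstB x, hb]; generalize A 0 = u; revert u; decide
      · rw [hmidA', hconstA x]; generalize A 0 = u; revert u; decide
      · rw [hm2, hconstB x, hb]; generalize A 0 = u; revert u; decide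
      · rw [h11, hconstB x, hb]; generalize A 0 = u; revert u; decide
      · rw [h11, hconstB x, hb]; generalize A 0 = u; revert u; decide
    · -- form 4
      right; right; right
      refine ⟨i, j, k, A 0, hij, Ne.symm hki, Ne.symm hkj, ?_⟩
      have hm1 : ∀ x, G f i j k 0 1 0 x = B x := by
        intro x
        have := hmidB x
        rwa [show (1:ZMod 2)+1 = 0 from by decide] at this
      have hm2 : ∀ x, G f i j k 1 0 0 x = B x := by
        intro x
        have := hmidB' x
        rwa [show (1:ZMod 2)+1 = 0 from by decide] at this
      intro x
      rw [f_eq_G (f := f) hki hkj hij x]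
      rcases zcases (x i) with h | h <;> rcases zcases (x j) with h' | h' <;>
        rcases zcases (x k) with h'' | h'' <;> rw [h, h', h'']
      · rw [h00, hconstA x]; generalize A 0 = u; revert u; decide
      · rw [h00, hconstA x]; generalize A 0 = u; revert u; decide
      · rw [hm1, hconstB x, hb]; generalize A 0 = u; revert u; decide
      · rw [hmidA, hconstA x]; generalize A 0 = u; revert u; decide
      · rw [hm2, hconstB x, hb]; generalize A 0 = u; revert u; decide
      · rw [hmidA', hconstA x]; generalize A 0 = u; revert u; decide
      · rw [h11, hconstB x, hb]; generalize A 0 = u; revert u; decide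
      · rw [h11, hconstB x, hb]; generalize A 0 = u; revert u; decide


/-! ### the heart of the proof -/

theorem heart (f : Fn n) (hf2 : 2 ≤ essArity f) :
    (∃ a b, a ≠ b ∧ Essential f a ∧ Essential f b ∧ Good f a b) ∨ Forms f := by
  classical
  by_cases hnull : ∀ a b, Essential f a → Essential f b → a ≠ b → ¬ NN f a b
  · right
    rcases eq_or_lt_of_le hf2 with h2 | h3
    · exact null_form2 hnull h2.symm
    · exact null_form_ge3 hnull h3
  · push_neg at hnull
    obtain ⟨i0, j0, hi0, hj0, hne0, hNN0⟩ := hnull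
    by_cases hm2 : essArity f = 2
    · left
      refine ⟨i0, j0, hne0, hi0, hj0, hNN0, ?_⟩
      intro c hc hci hcj
      exfalso
      have hsub : ({i0, j0} : Set (Fin n)) ⊆ {c | Essential f c} := by
        rintro u (rfl | rfl)
        · exact hi0
        · exact hj0
      have heq : ({i0, j0} : Set (Fin n)) = {c | Essential f c} := by
        apply Set.eq_of_subset_of_ncard_le hsub
        rw [show Set.ncard {c | Essential f c} = 2 from hm2, Set.ncard_pair hne0]
      have hcmem : c ∈ ({i0, j0} : Set (Fin n)) := by rw [heq]; exact hc
      rcases hcmem with rfl | rfl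
      · exact hci rfl
      · exact hcj rfl
    · obtain ⟨p, hpP, hpmax⟩ := Set.Finite.exists_maximalFor
        (fun p : Fin n × Fin n => ({c | Cov f p.1 p.2 c}).ncard)
        {p : Fin n × Fin n | p.1 ≠ p.2 ∧ Essential f p.1 ∧ Essential f p.2 ∧
          NN f p.1 p.2}
        (Set.toFinite _) ⟨(i0, j0), hne0, hi0, hj0, hNN0⟩
      obtain ⟨i, j⟩ := p
      obtain ⟨hij, hi, hj, hNN⟩ := hpP
      by_cases hgood : Good f i j
      · exact Or.inl ⟨i, j, hij, hi, hj, hgood⟩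
      have hdead : ∃ k, Essential f k ∧ k ≠ i ∧ k ≠ j ∧ ¬ Cov f i j k := by
        by_contra hnok
        push_neg at hnok
        exact hgood ⟨hNN, fun c hc hci hcj => hnok c hc hci hcj⟩
      obtain ⟨k, hk, hki, hkj, hkdead⟩ := hdead
      have hdead0 : ¬ Essential (R2 f i j 0 0) k := fun h => hkdead (Or.inl h)
      have hdead1 : ¬ Essential (R2 f i j 1 1) k := fun h => hkdead (Or.inr h)
      have hmax : ∀ a b : Fin n, a ≠ b → Essential f a → Essential f b →
          NN f a b →
          ({c | Cov f i j c}).ncard < ({c | Cov f a b c}).ncard → False := by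
        intro a b hab ha hb hnnab hlt
        have heq := hpmax (j := (a, b)) ⟨hab, ha, hb, hnnab⟩ (le_of_lt hlt)
        simp only at heq hlt
        omega
      have step1 := step_lemma hij hki hkj hi hj hk hdead0 hdead1 hmax
      have hdead0' : ¬ Essential (R2 f j i 0 0) k := by
        rw [R2_symm f hij.symm 0 0]
        exact hdead0
      have hdead1' : ¬ Essential (R2 f j i 1 1) k := by
        rw [R2_symm f hij.symm 1 1]
        exact hdead1
      have hmax' : ∀ a b : Fin n, a ≠ b → Essential f a → Essential f b →
          NN f a b →
          ({c | Cov f j i c}).ncard < ({c | Cov f a b c}).ncard → False := by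
        intro a b hab ha hb hnnab hlt
        rw [covS_symm f hij] at hlt
        exact hmax a b hab ha hb hnnab hlt
      have step2 := step_lemma hij.symm hkj hki hj hi hk hdead0' hdead1' hmax'
      simp only [G_swap hij, R2_symm f hij.symm] at step2
      have hG00 : ∀ (ct : ZMod 2) (x : Pt n),
          G f i j k 0 0 ct x = R2 f i j 0 0 x := by
        intro ct x
        have h : G f i j k 0 0 ct x = R2 f i j 0 0 (update x k ct) := rfl
        rw [h, noess_update hdead0]
      have hG11 : ∀ (ct : ZMod 2) (x : Pt n),
          G f i j k 1 1 ct x = R2 f i j 1 1 x := by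
        intro ct x
        have h : G f i j k 1 1 ct x = R2 f i j 1 1 (update x k ct) := rfl
        rw [h, noess_update hdead1]
      rcases step1 with ⟨hFa1, hFa2⟩ | ⟨hFb1, hFb2⟩ <;>
        rcases step2 with ⟨hFa1', hFa2'⟩ | ⟨hFb1', hFb2'⟩
      · -- (Fa, Fa') : form 4 shape, t = 1
        refine final_case hij hki hkj hi hj hk 1 hG00 hG11 hFa1 hFa1' ?_ ?_ hNN
        · intro x
          rw [show (1:ZMod 2)+1 = 0 from by decide]
          exact hFa2' x
        · intro x
          rw [show (1:ZMod 2)+1 = 0 from by decide]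
          exact hFa2 x
      · -- (Fa, Fb') : k is inessential, contradiction
        exfalso
        obtain ⟨x, hx⟩ := ess_iff.mp hk
        rw [fk_eq_G (f := f) hki hkj hij x 0, fk_eq_G (f := f) hki hkj hij x 1] at hx
        rcases zcases (x i) with h | h <;> rcases zcases (x j) with h' | h' <;>
          rw [h, h'] at hx
        · rw [hG00, hG00] at hx; exact hx rfl
        · rw [hFb1', hFa1] at hx; exact hx rfl
        · rw [hFa2, hFb2'] at hx; exact hx rfl
        · rw [hG11, hG11] at hx; exact hx rfl
      · -- (Fb, Fa') : k is inessential, contradiction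
        exfalso
        obtain ⟨x, hx⟩ := ess_iff.mp hk
        rw [fk_eq_G (f := f) hki hkj hij x 0, fk_eq_G (f := f) hki hkj hij x 1] at hx
        rcases zcases (x i) with h | h <;> rcases zcases (x j) with h' | h' <;>
          rw [h, h'] at hx
        · rw [hG00, hG00] at hx; exact hx rfl
        · rw [hFa2', hFb2] at hx; exact hx rfl
        · rw [hFb1, hFa1'] at hx; exact hx rfl
        · rw [hG11, hG11] at hx; exact hx rfl
      · -- (Fb, Fb') : majority shape, t = 0
        refine final_case hij hki hkj hi hj hk 0 hG00 hG11 hFb1' hFb1 ?_ ?_ hNN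
        · intro x
          rw [show (0:ZMod 2)+1 = 1 from by decide]
          exact hFb2 x
        · intro x
          rw [show (0:ZMod 2)+1 = 1 from by decide]
          exact hFb2' x

end Stmt7

/-- If a Boolean function with at least two essential variables is not of any of the four
special forms, then its arity gap is `1`: some identification of two essential variables
loses exactly one essential variable. -/
theorem stmt_7 {n : ℕ} (f : (Fin n → ZMod 2) → ZMod 2) (hf : 2 ≤ essArity f)
    (hspec :
      ¬ ((∃ (S : Finset (Fin n)) (c : ZMod 2), 2 ≤ S.card ∧
            ∀ x : Fin n → ZMod 2, f x = (∑ i ∈ S, x i) + c) ∨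
         (∃ (i j : Fin n) (c : ZMod 2), i ≠ j ∧
            ∀ x : Fin n → ZMod 2, f x = x i * x j + x i + c) ∨
         (∃ (i j k : Fin n) (c : ZMod 2), i ≠ j ∧ i ≠ k ∧ j ≠ k ∧
            ∀ x : Fin n → ZMod 2, f x = x i * x j + x i * x k + x j * x k + c) ∨
         (∃ (i j k : Fin n) (c : ZMod 2), i ≠ j ∧ i ≠ k ∧ j ≠ k ∧
            ∀ x : Fin n → ZMod 2,
              f x = x i * x j + x i * x k + x j * x k + x i + x j + c))) :
    arityGap f = 1 ∧
      ∃ i j : Fin n, i ≠ j ∧ Essential f i ∧ Essential f j ∧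
        essArity (idMinor f i j) = essArity f - 1 := by
  rcases Stmt7.heart f hf with hgood | hforms
  · exact Stmt7.main_of_good hf hgood
  · exact absurd hforms hspec
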